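/- Let D ≥ 1 be an integer, E = ℂ^D, and let R_B ⊂ E^{⊗3} be the linear span of {[[x,y]_⊗, z]_⊗ : x, y, z ∈ E}. Then the subspace (R_B⊗E) ∩ (E⊗R_B) of E^{⊗4} has dimension D²(D²−1)/12. -/

import Mathlib

set_option maxSynthPendingDepth 5

open TensorProduct

/-- The relation space `R_B ⊂ (ℂ^D)^{⊗3}` of the parafermionic algebra: the linear span of the
elements `[[x,y]_⊗, z]_⊗ = x⊗y⊗z - y⊗x⊗z - z⊗x⊗y + z⊗y⊗x` for `x, y, z ∈ ℂ^D`. -/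
noncomputable def parafermionicRelations (D : ℕ) :
    Submodule ℂ ((Fin D → ℂ) ⊗[ℂ] ((Fin D → ℂ) ⊗[ℂ] (Fin D → ℂ))) :=
  Submodule.span ℂ
    {t | ∃ x y z : Fin D → ℂ,
      t = x ⊗ₜ[ℂ] (y ⊗ₜ[ℂ] z) - y ⊗ₜ[ℂ] (x ⊗ₜ[ℂ] z)
          - z ⊗ₜ[ℂ] (x ⊗ₜ[ℂ] y) + z ⊗ₜ[ℂ] (y ⊗ₜ[ℂ] x)}

section Embeddings

variable (E : Type*) [AddCommGroup E] [Module ℂ E]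

/-- Reassociation `E^{⊗3} ⊗ E ≃ E^{⊗4}`. -/
noncomputable def assocFour :
    ((E ⊗[ℂ] (E ⊗[ℂ] E)) ⊗[ℂ] E) ≃ₗ[ℂ] E ⊗[ℂ] (E ⊗[ℂ] (E ⊗[ℂ] E)) :=
  (TensorProduct.assoc ℂ E (E ⊗[ℂ] E) E).trans
    (TensorProduct.congr (LinearEquiv.refl ℂ E) (TensorProduct.assoc ℂ E E E))

variable {E}

/-- The subspace `R ⊗ E` of `E^{⊗4}` determined by a subspace `R ⊆ E^{⊗3}`. -/
noncomputable def subRE (R : Submodule ℂ (E ⊗[ℂ] (E ⊗[ℂ] E))) :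
    Submodule ℂ (E ⊗[ℂ] (E ⊗[ℂ] (E ⊗[ℂ] E))) :=
  Submodule.map (assocFour E).toLinearMap
    (LinearMap.range (TensorProduct.map R.subtype (LinearMap.id (M := E))))

/-- The subspace `E ⊗ R` of `E^{⊗4}` determined by a subspace `R ⊆ E^{⊗3}`. -/
noncomputable def subER (R : Submodule ℂ (E ⊗[ℂ] (E ⊗[ℂ] E))) :
    Submodule ℂ (E ⊗[ℂ] (E ⊗[ℂ] (E ⊗[ℂ] E))) :=
  LinearMap.range (R.subtype.lTensor E)

end Embeddings


namespace ParafermAux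

open LinearMap

variable (E : Type*) [AddCommGroup E] [Module ℂ E]

abbrev T3 := E ⊗[ℂ] (E ⊗[ℂ] E)
abbrev T4 := E ⊗[ℂ] (E ⊗[ℂ] (E ⊗[ℂ] E))

noncomputable def s1 : T4 E →ₗ[ℂ] T4 E :=
  (TensorProduct.leftComm ℂ E E (E ⊗[ℂ] E)).toLinearMap
noncomputable def s2 : T4 E →ₗ[ℂ] T4 E :=
  lTensor E (TensorProduct.leftComm ℂ E E E).toLinearMap
noncomputable def s3 : T4 E →ₗ[ℂ] T4 E :=
  lTensor E (lTensor E (TensorProduct.comm ℂ E E).toLinearMap)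

@[simp] lemma s1_tmul (x y z w : E) :
    s1 E (x ⊗ₜ[ℂ] (y ⊗ₜ[ℂ] (z ⊗ₜ[ℂ] w))) = y ⊗ₜ[ℂ] (x ⊗ₜ[ℂ] (z ⊗ₜ[ℂ] w)) := by simp [s1]
@[simp] lemma s2_tmul (x y z w : E) :
    s2 E (x ⊗ₜ[ℂ] (y ⊗ₜ[ℂ] (z ⊗ₜ[ℂ] w))) = x ⊗ₜ[ℂ] (z ⊗ₜ[ℂ] (y ⊗ₜ[ℂ] w)) := by simp [s2]
@[simp] lemma s3_tmul (x y z w : E) :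
    s3 E (x ⊗ₜ[ℂ] (y ⊗ₜ[ℂ] (z ⊗ₜ[ℂ] w))) = x ⊗ₜ[ℂ] (y ⊗ₜ[ℂ] (w ⊗ₜ[ℂ] z)) := by simp [s3]

noncomputable def opTheta : T3 E →ₗ[ℂ] T3 E :=
  let c : T3 E →ₗ[ℂ] T3 E := (TensorProduct.leftComm ℂ E E E).toLinearMap
  let d : T3 E →ₗ[ℂ] T3 E := lTensor E (TensorProduct.comm ℂ E E).toLinearMap
  LinearMap.id - c - c ∘ₗ d + c ∘ₗ d ∘ₗ c

@[simp] lemma opTheta_tmul (x y z : E) :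
    opTheta E (x ⊗ₜ[ℂ] (y ⊗ₜ[ℂ] z)) =
      x ⊗ₜ[ℂ] (y ⊗ₜ[ℂ] z) - y ⊗ₜ[ℂ] (x ⊗ₜ[ℂ] z) - z ⊗ₜ[ℂ] (x ⊗ₜ[ℂ] y) + z ⊗ₜ[ℂ] (y ⊗ₜ[ℂ] x) := by
  simp [opTheta]

@[simp] lemma assocFour_tmul (x y z w : E) :
    assocFour E ((x ⊗ₜ[ℂ] (y ⊗ₜ[ℂ] z)) ⊗ₜ[ℂ] w) = x ⊗ₜ[ℂ] (y ⊗ₜ[ℂ] (z ⊗ₜ[ℂ] w)) := by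
  simp [assocFour]

@[simp] lemma assocFour_symm_tmul (x y z w : E) :
    (assocFour E).symm (x ⊗ₜ[ℂ] (y ⊗ₜ[ℂ] (z ⊗ₜ[ℂ] w))) = (x ⊗ₜ[ℂ] (y ⊗ₜ[ℂ] z)) ⊗ₜ[ℂ] w := by
  rw [LinearEquiv.symm_apply_eq]; simp

noncomputable def opA : T4 E →ₗ[ℂ] T4 E :=
  (assocFour E).toLinearMap ∘ₗ rTensor E (opTheta E) ∘ₗ (assocFour E).symm.toLinearMap

noncomputable def opB : T4 E →ₗ[ℂ] T4 E := lTensor E (opTheta E)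

@[simp] lemma opA_tmul (x y z w : E) :
    opA E (x ⊗ₜ[ℂ] (y ⊗ₜ[ℂ] (z ⊗ₜ[ℂ] w))) =
      x ⊗ₜ[ℂ] (y ⊗ₜ[ℂ] (z ⊗ₜ[ℂ] w)) - y ⊗ₜ[ℂ] (x ⊗ₜ[ℂ] (z ⊗ₜ[ℂ] w))
        - z ⊗ₜ[ℂ] (x ⊗ₜ[ℂ] (y ⊗ₜ[ℂ] w)) + z ⊗ₜ[ℂ] (y ⊗ₜ[ℂ] (x ⊗ₜ[ℂ] w)) := by
  simp [opA, sub_tmul, add_tmul]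

@[simp] lemma opB_tmul (x y z w : E) :
    opB E (x ⊗ₜ[ℂ] (y ⊗ₜ[ℂ] (z ⊗ₜ[ℂ] w))) =
      x ⊗ₜ[ℂ] (y ⊗ₜ[ℂ] (z ⊗ₜ[ℂ] w)) - x ⊗ₜ[ℂ] (z ⊗ₜ[ℂ] (y ⊗ₜ[ℂ] w))
        - x ⊗ₜ[ℂ] (w ⊗ₜ[ℂ] (y ⊗ₜ[ℂ] z)) + x ⊗ₜ[ℂ] (w ⊗ₜ[ℂ] (z ⊗ₜ[ℂ] y)) := by
  simp [opB, tmul_sub, tmul_add]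

noncomputable def opPi : T4 E →ₗ[ℂ] T4 E :=
    ((1 : ℂ)/12) • (LinearMap.id : T4 E →ₗ[ℂ] T4 E) +
    ((-1 : ℂ)/12) • (s2 E) +
    ((-1 : ℂ)/12) • (s2 E ∘ₗ s3 E) +
    ((1 : ℂ)/12) • (s2 E ∘ₗ s3 E ∘ₗ s2 E) +
    ((1 : ℂ)/12) • (s3 E ∘ₗ s1 E) +
    ((1 : ℂ)/12) • (s1 E ∘ₗ s2 E ∘ₗ s3 E) +
    ((-1 : ℂ)/12) • (s3 E ∘ₗ s1 E ∘ₗ s2 E) +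
    ((-1 : ℂ)/12) • (s1 E ∘ₗ s2 E ∘ₗ s3 E ∘ₗ s2 E) +
    ((-1 : ℂ)/12) • (s2 E ∘ₗ s1 E) +
    ((-1 : ℂ)/12) • (s2 E ∘ₗ s3 E ∘ₗ s1 E) +
    ((1 : ℂ)/12) • (s1 E ∘ₗ s2 E ∘ₗ s1 E) +
    ((1 : ℂ)/12) • (s2 E ∘ₗ s3 E ∘ₗ s1 E ∘ₗ s2 E) +
    ((1 : ℂ)/12) • (s3 E ∘ₗ s2 E ∘ₗ s1 E) +
    ((-1 : ℂ)/12) • (s3 E ∘ₗ s1 E ∘ₗ s2 E ∘ₗ s1 E) +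
    ((-1 : ℂ)/12) • (s1 E ∘ₗ s2 E ∘ₗ s3 E ∘ₗ s2 E ∘ₗ s1 E) +
    ((1 : ℂ)/12) • (s1 E ∘ₗ s2 E ∘ₗ s3 E ∘ₗ s1 E ∘ₗ s2 E ∘ₗ s1 E)

noncomputable def opa1 : T4 E →ₗ[ℂ] T4 E :=
    ((1 : ℂ)/12) • (LinearMap.id : T4 E →ₗ[ℂ] T4 E) +
    ((-1 : ℂ)/12) • (s2 E) +
    ((-1 : ℂ)/12) • (s2 E ∘ₗ s3 E) +
    ((1 : ℂ)/12) • (s2 E ∘ₗ s3 E ∘ₗ s2 E) +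
    ((1 : ℂ)/12) • (s3 E ∘ₗ s2 E ∘ₗ s1 E)

noncomputable def opa2 : T4 E →ₗ[ℂ] T4 E :=
    ((1 : ℂ)/12) • (LinearMap.id : T4 E →ₗ[ℂ] T4 E) +
    ((1 : ℂ)/12) • (s3 E ∘ₗ s1 E) +
    ((1 : ℂ)/12) • (s1 E ∘ₗ s2 E ∘ₗ s3 E) +
    ((-1 : ℂ)/12) • (s3 E ∘ₗ s1 E ∘ₗ s2 E) +
    ((-1 : ℂ)/12) • (s1 E ∘ₗ s2 E ∘ₗ s3 E ∘ₗ s2 E)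

noncomputable def opu : T4 E →ₗ[ℂ] T4 E :=
    ((1 : ℂ)/6) • (LinearMap.id : T4 E →ₗ[ℂ] T4 E) +
    ((-1 : ℂ)/6) • (s3 E) +
    ((1 : ℂ)/12) • (s2 E) +
    ((1 : ℂ)/36) • (s2 E ∘ₗ s3 E) +
    ((-1 : ℂ)/6) • (s3 E ∘ₗ s2 E) +
    ((1 : ℂ)/18) • (s2 E ∘ₗ s3 E ∘ₗ s2 E) +
    ((1 : ℂ)/9) • (s1 E ∘ₗ s2 E ∘ₗ s3 E) +
    ((1 : ℂ)/12) • (s3 E ∘ₗ s1 E ∘ₗ s2 E) +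
    ((1 : ℂ)/18) • (s1 E ∘ₗ s2 E ∘ₗ s3 E ∘ₗ s2 E) +
    ((1 : ℂ)/36) • (s2 E ∘ₗ s3 E ∘ₗ s1 E) +
    ((-1 : ℂ)/18) • (s1 E ∘ₗ s2 E ∘ₗ s3 E ∘ₗ s1 E) +
    ((-1 : ℂ)/36) • (s2 E ∘ₗ s3 E ∘ₗ s1 E ∘ₗ s2 E) +
    ((-1 : ℂ)/36) • (s1 E ∘ₗ s2 E ∘ₗ s3 E ∘ₗ s1 E ∘ₗ s2 E)

noncomputable def opv : T4 E →ₗ[ℂ] T4 E :=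
    ((5 : ℂ)/12) • (LinearMap.id : T4 E →ₗ[ℂ] T4 E) +
    ((1 : ℂ)/4) • (s3 E) +
    ((-1 : ℂ)/4) • (s2 E) +
    ((-1 : ℂ)/12) • (s2 E ∘ₗ s3 E) +
    ((-1 : ℂ)/12) • (s1 E) +
    ((-1 : ℂ)/12) • (s1 E ∘ₗ s2 E ∘ₗ s3 E)


@[simp] lemma opPi_tmul (x y z w : E) :
    opPi E (x ⊗ₜ[ℂ] (y ⊗ₜ[ℂ] (z ⊗ₜ[ℂ] w))) =
      ((1 : ℂ)/12) • (x ⊗ₜ[ℂ] (y ⊗ₜ[ℂ] (z ⊗ₜ[ℂ] w))) +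
      ((-1 : ℂ)/12) • (x ⊗ₜ[ℂ] (z ⊗ₜ[ℂ] (y ⊗ₜ[ℂ] w))) +
      ((-1 : ℂ)/12) • (x ⊗ₜ[ℂ] (w ⊗ₜ[ℂ] (y ⊗ₜ[ℂ] z))) +
      ((1 : ℂ)/12) • (x ⊗ₜ[ℂ] (w ⊗ₜ[ℂ] (z ⊗ₜ[ℂ] y))) +
      ((1 : ℂ)/12) • (y ⊗ₜ[ℂ] (x ⊗ₜ[ℂ] (w ⊗ₜ[ℂ] z))) +
      ((1 : ℂ)/12) • (w ⊗ₜ[ℂ] (x ⊗ₜ[ℂ] (y ⊗ₜ[ℂ] z))) +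
      ((-1 : ℂ)/12) • (z ⊗ₜ[ℂ] (x ⊗ₜ[ℂ] (w ⊗ₜ[ℂ] y))) +
      ((-1 : ℂ)/12) • (w ⊗ₜ[ℂ] (x ⊗ₜ[ℂ] (z ⊗ₜ[ℂ] y))) +
      ((-1 : ℂ)/12) • (y ⊗ₜ[ℂ] (z ⊗ₜ[ℂ] (x ⊗ₜ[ℂ] w))) +
      ((-1 : ℂ)/12) • (y ⊗ₜ[ℂ] (w ⊗ₜ[ℂ] (x ⊗ₜ[ℂ] z))) +
      ((1 : ℂ)/12) • (z ⊗ₜ[ℂ] (y ⊗ₜ[ℂ] (x ⊗ₜ[ℂ] w))) +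
      ((1 : ℂ)/12) • (z ⊗ₜ[ℂ] (w ⊗ₜ[ℂ] (x ⊗ₜ[ℂ] y))) +
      ((1 : ℂ)/12) • (y ⊗ₜ[ℂ] (z ⊗ₜ[ℂ] (w ⊗ₜ[ℂ] x))) +
      ((-1 : ℂ)/12) • (z ⊗ₜ[ℂ] (y ⊗ₜ[ℂ] (w ⊗ₜ[ℂ] x))) +
      ((-1 : ℂ)/12) • (w ⊗ₜ[ℂ] (y ⊗ₜ[ℂ] (z ⊗ₜ[ℂ] x))) +
      ((1 : ℂ)/12) • (w ⊗ₜ[ℂ] (z ⊗ₜ[ℂ] (y ⊗ₜ[ℂ] x))) := by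
  simp [opPi]

@[simp] lemma opa1_tmul (x y z w : E) :
    opa1 E (x ⊗ₜ[ℂ] (y ⊗ₜ[ℂ] (z ⊗ₜ[ℂ] w))) =
      ((1 : ℂ)/12) • (x ⊗ₜ[ℂ] (y ⊗ₜ[ℂ] (z ⊗ₜ[ℂ] w))) +
      ((-1 : ℂ)/12) • (x ⊗ₜ[ℂ] (z ⊗ₜ[ℂ] (y ⊗ₜ[ℂ] w))) +
      ((-1 : ℂ)/12) • (x ⊗ₜ[ℂ] (w ⊗ₜ[ℂ] (y ⊗ₜ[ℂ] z))) +
      ((1 : ℂ)/12) • (x ⊗ₜ[ℂ] (w ⊗ₜ[ℂ] (z ⊗ₜ[ℂ] y))) +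
      ((1 : ℂ)/12) • (y ⊗ₜ[ℂ] (z ⊗ₜ[ℂ] (w ⊗ₜ[ℂ] x))) := by
  simp [opa1]

@[simp] lemma opa2_tmul (x y z w : E) :
    opa2 E (x ⊗ₜ[ℂ] (y ⊗ₜ[ℂ] (z ⊗ₜ[ℂ] w))) =
      ((1 : ℂ)/12) • (x ⊗ₜ[ℂ] (y ⊗ₜ[ℂ] (z ⊗ₜ[ℂ] w))) +
      ((1 : ℂ)/12) • (y ⊗ₜ[ℂ] (x ⊗ₜ[ℂ] (w ⊗ₜ[ℂ] z))) +
      ((1 : ℂ)/12) • (w ⊗ₜ[ℂ] (x ⊗ₜ[ℂ] (y ⊗ₜ[ℂ] z))) +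
      ((-1 : ℂ)/12) • (z ⊗ₜ[ℂ] (x ⊗ₜ[ℂ] (w ⊗ₜ[ℂ] y))) +
      ((-1 : ℂ)/12) • (w ⊗ₜ[ℂ] (x ⊗ₜ[ℂ] (z ⊗ₜ[ℂ] y))) := by
  simp [opa2]

@[simp] lemma opu_tmul (x y z w : E) :
    opu E (x ⊗ₜ[ℂ] (y ⊗ₜ[ℂ] (z ⊗ₜ[ℂ] w))) =
      ((1 : ℂ)/6) • (x ⊗ₜ[ℂ] (y ⊗ₜ[ℂ] (z ⊗ₜ[ℂ] w))) +
      ((-1 : ℂ)/6) • (x ⊗ₜ[ℂ] (y ⊗ₜ[ℂ] (w ⊗ₜ[ℂ] z))) +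
      ((1 : ℂ)/12) • (x ⊗ₜ[ℂ] (z ⊗ₜ[ℂ] (y ⊗ₜ[ℂ] w))) +
      ((1 : ℂ)/36) • (x ⊗ₜ[ℂ] (w ⊗ₜ[ℂ] (y ⊗ₜ[ℂ] z))) +
      ((-1 : ℂ)/6) • (x ⊗ₜ[ℂ] (z ⊗ₜ[ℂ] (w ⊗ₜ[ℂ] y))) +
      ((1 : ℂ)/18) • (x ⊗ₜ[ℂ] (w ⊗ₜ[ℂ] (z ⊗ₜ[ℂ] y))) +
      ((1 : ℂ)/9) • (w ⊗ₜ[ℂ] (x ⊗ₜ[ℂ] (y ⊗ₜ[ℂ] z))) +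
      ((1 : ℂ)/12) • (z ⊗ₜ[ℂ] (x ⊗ₜ[ℂ] (w ⊗ₜ[ℂ] y))) +
      ((1 : ℂ)/18) • (w ⊗ₜ[ℂ] (x ⊗ₜ[ℂ] (z ⊗ₜ[ℂ] y))) +
      ((1 : ℂ)/36) • (y ⊗ₜ[ℂ] (w ⊗ₜ[ℂ] (x ⊗ₜ[ℂ] z))) +
      ((-1 : ℂ)/18) • (w ⊗ₜ[ℂ] (y ⊗ₜ[ℂ] (x ⊗ₜ[ℂ] z))) +
      ((-1 : ℂ)/36) • (z ⊗ₜ[ℂ] (w ⊗ₜ[ℂ] (x ⊗ₜ[ℂ] y))) +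
      ((-1 : ℂ)/36) • (w ⊗ₜ[ℂ] (z ⊗ₜ[ℂ] (x ⊗ₜ[ℂ] y))) := by
  simp [opu]

@[simp] lemma opv_tmul (x y z w : E) :
    opv E (x ⊗ₜ[ℂ] (y ⊗ₜ[ℂ] (z ⊗ₜ[ℂ] w))) =
      ((5 : ℂ)/12) • (x ⊗ₜ[ℂ] (y ⊗ₜ[ℂ] (z ⊗ₜ[ℂ] w))) +
      ((1 : ℂ)/4) • (x ⊗ₜ[ℂ] (y ⊗ₜ[ℂ] (w ⊗ₜ[ℂ] z))) +
      ((-1 : ℂ)/4) • (x ⊗ₜ[ℂ] (z ⊗ₜ[ℂ] (y ⊗ₜ[ℂ] w))) +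
      ((-1 : ℂ)/12) • (x ⊗ₜ[ℂ] (w ⊗ₜ[ℂ] (y ⊗ₜ[ℂ] z))) +
      ((-1 : ℂ)/12) • (y ⊗ₜ[ℂ] (x ⊗ₜ[ℂ] (z ⊗ₜ[ℂ] w))) +
      ((-1 : ℂ)/12) • (w ⊗ₜ[ℂ] (x ⊗ₜ[ℂ] (y ⊗ₜ[ℂ] z))) := by
  simp [opv]

set_option maxHeartbeats 2000000

lemma idA : opA E ∘ₗ opA E = (3:ℂ) • opA E := by
  ext x y z w
  simp
  module

lemma idB : opB E ∘ₗ opB E = (3:ℂ) • opB E := by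
  ext x y z w
  simp
  module

lemma fact1 : opPi E = opA E ∘ₗ opa1 E := by
  ext x y z w
  simp
  module

lemma fact2 : opPi E = opB E ∘ₗ opa2 E := by
  ext x y z w
  simp
  module

lemma ident :
    opPi E + opu E ∘ₗ ((3:ℂ) • LinearMap.id - opA E)
      + opv E ∘ₗ ((3:ℂ) • LinearMap.id - opB E) = LinearMap.id := by
  ext x y z w
  simp
  module

lemma piIdem : opPi E ∘ₗ opPi E = opPi E := by
  ext x y z w
  simp
  module

lemma range_opPi :
    LinearMap.range (opPi E) = LinearMap.range (opA E) ⊓ LinearMap.range (opB E) := by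
  apply le_antisymm
  · rintro _ ⟨t, rfl⟩
    exact ⟨⟨opa1 E t, by rw [← LinearMap.comp_apply, ← fact1]⟩,
           ⟨opa2 E t, by rw [← LinearMap.comp_apply, ← fact2]⟩⟩
  · rintro x ⟨⟨a, ha⟩, ⟨b, hb⟩⟩
    have hA : opA E x = (3:ℂ) • x := by
      rw [← ha, ← LinearMap.comp_apply, idA, LinearMap.smul_apply]
    have hB : opB E x = (3:ℂ) • x := by
      rw [← hb, ← LinearMap.comp_apply, idB, LinearMap.smul_apply]
    have h := DFunLike.congr_fun (ident E) x
    simp only [LinearMap.add_apply, LinearMap.smul_apply, LinearMap.comp_apply,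
      LinearMap.sub_apply, LinearMap.id_apply, hA, hB, sub_self, map_zero, smul_zero,
      add_zero] at h
    exact ⟨x, h⟩

lemma relations_eq_range :
    Submodule.span ℂ
        {t : T3 E | ∃ x y z : E,
          t = x ⊗ₜ[ℂ] (y ⊗ₜ[ℂ] z) - y ⊗ₜ[ℂ] (x ⊗ₜ[ℂ] z)
              - z ⊗ₜ[ℂ] (x ⊗ₜ[ℂ] y) + z ⊗ₜ[ℂ] (y ⊗ₜ[ℂ] x)} =
      LinearMap.range (opTheta E) := by
  apply le_antisymm
  · rw [Submodule.span_le]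
    rintro _ ⟨x, y, z, rfl⟩
    exact ⟨x ⊗ₜ[ℂ] (y ⊗ₜ[ℂ] z), by simp⟩
  · rintro _ ⟨t, rfl⟩
    induction t using TensorProduct.induction_on with
    | zero => simp
    | tmul x m =>
      induction m using TensorProduct.induction_on with
      | zero => simp
      | tmul y z => exact Submodule.subset_span ⟨x, y, z, by simp⟩
      | add m₁ m₂ h₁ h₂ => rw [tmul_add, map_add]; exact add_mem h₁ h₂
    | add t₁ t₂ h₁ h₂ => rw [map_add]; exact add_mem h₁ h₂

lemma subRE_range :
    subRE (LinearMap.range (opTheta E)) = LinearMap.range (opA E) := by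
  have key : LinearMap.range (TensorProduct.map (LinearMap.range (opTheta E)).subtype
      (LinearMap.id (M := E))) = LinearMap.range (rTensor E (opTheta E)) := by
    have hcomp : TensorProduct.map (LinearMap.range (opTheta E)).subtype (LinearMap.id (M := E))
        ∘ₗ rTensor _ (opTheta E).rangeRestrict = rTensor E (opTheta E) := by
      rw [LinearMap.rTensor, LinearMap.rTensor, ← TensorProduct.map_comp]
      rfl
    apply le_antisymm
    · rw [← hcomp, LinearMap.range_comp_of_range_eq_top]
      rw [LinearMap.range_eq_top]
      exact LinearMap.rTensor_surjective _ (LinearMap.surjective_rangeRestrict _)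
    · rw [← hcomp]
      exact LinearMap.range_comp_le_range _ _
  have hopA : opA E = ((assocFour E).toLinearMap ∘ₗ rTensor E (opTheta E))
      ∘ₗ (assocFour E).symm.toLinearMap := by
    rw [opA, LinearMap.comp_assoc]
  rw [subRE, key, ← LinearMap.range_comp, hopA,
    LinearMap.range_comp_of_range_eq_top _ (LinearMap.range_eq_top.mpr
      (assocFour E).symm.surjective)]

lemma subER_range :
    subER (LinearMap.range (opTheta E)) = LinearMap.range (opB E) := by
  have hcomp : (LinearMap.range (opTheta E)).subtype.lTensor E
      ∘ₗ lTensor E (opTheta E).rangeRestrict = opB E := by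
    rw [opB, ← LinearMap.lTensor_comp]
    rfl
  rw [subER]
  apply le_antisymm
  · rw [← hcomp, LinearMap.range_comp_of_range_eq_top]
    rw [LinearMap.range_eq_top]
    exact LinearMap.lTensor_surjective _ (LinearMap.surjective_rangeRestrict _)
  · rw [← hcomp]
    exact LinearMap.range_comp_le_range _ _

end ParafermAux

namespace ParafermAux

open LinearMap

variable (D : ℕ)

noncomputable def B4 : Module.Basis (Fin D × (Fin D × (Fin D × Fin D))) ℂ (T4 (Fin D → ℂ)) :=
  (Pi.basisFun ℂ (Fin D)).tensorProduct ((Pi.basisFun ℂ (Fin D)).tensorProduct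
    ((Pi.basisFun ℂ (Fin D)).tensorProduct (Pi.basisFun ℂ (Fin D))))

lemma trace_eq_sum (f : T4 (Fin D → ℂ) →ₗ[ℂ] T4 (Fin D → ℂ)) :
    trace ℂ _ f = ∑ p, (B4 D).repr (f (B4 D p)) p := by
  rw [trace_eq_matrix_trace ℂ (B4 D), Matrix.trace]
  simp [Matrix.diag, LinearMap.toMatrix_apply]

set_option synthInstance.maxHeartbeats 400000 in
lemma trChain0 : trace ℂ _ (LinearMap.id : T4 (Fin D → ℂ) →ₗ[ℂ] T4 (Fin D → ℂ)) = (D:ℂ)^4 := by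
  rw [trace_eq_sum]
  simp [B4, s1, s2, s3, Module.Basis.tensorProduct_apply, Module.Basis.tensorProduct_repr_tmul_apply,
    Finsupp.single_apply, Fintype.sum_prod_type, Pi.single_apply, Finset.sum_ite_eq,
    Finset.sum_ite_eq', mul_ite, ite_mul, Finset.sum_comm (γ := Fin D)]
  try ring

lemma trChain1 : trace ℂ _ (s2 (Fin D → ℂ)) = (D:ℂ)^3 := by
  rw [trace_eq_sum]
  simp [B4, s1, s2, s3, Module.Basis.tensorProduct_apply, Module.Basis.tensorProduct_repr_tmul_apply,
    Finsupp.single_apply, Fintype.sum_prod_type, Pi.single_apply, Finset.sum_ite_eq,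
    Finset.sum_ite_eq', mul_ite, ite_mul, Finset.sum_comm (γ := Fin D)]
  try ring

lemma trChain2 : trace ℂ _ (s2 (Fin D → ℂ) ∘ₗ s3 (Fin D → ℂ)) = (D:ℂ)^2 := by
  rw [trace_eq_sum]
  simp [B4, s1, s2, s3, Module.Basis.tensorProduct_apply, Module.Basis.tensorProduct_repr_tmul_apply,
    Finsupp.single_apply, Fintype.sum_prod_type, Pi.single_apply, Finset.sum_ite_eq,
    Finset.sum_ite_eq', mul_ite, ite_mul, Finset.sum_comm (γ := Fin D)]
  try ring

lemma trChain3 : trace ℂ _ (s2 (Fin D → ℂ) ∘ₗ s3 (Fin D → ℂ) ∘ₗ s2 (Fin D → ℂ)) = (D:ℂ)^3 := by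
  rw [trace_eq_sum]
  simp [B4, s1, s2, s3, Module.Basis.tensorProduct_apply, Module.Basis.tensorProduct_repr_tmul_apply,
    Finsupp.single_apply, Fintype.sum_prod_type, Pi.single_apply, Finset.sum_ite_eq,
    Finset.sum_ite_eq', mul_ite, ite_mul, Finset.sum_comm (γ := Fin D)]
  try ring

lemma trChain4 : trace ℂ _ (s3 (Fin D → ℂ) ∘ₗ s1 (Fin D → ℂ)) = (D:ℂ)^2 := by
  rw [trace_eq_sum]
  simp [B4, s1, s2, s3, Module.Basis.tensorProduct_apply, Module.Basis.tensorProduct_repr_tmul_apply,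
    Finsupp.single_apply, Fintype.sum_prod_type, Pi.single_apply, Finset.sum_ite_eq,
    Finset.sum_ite_eq', mul_ite, ite_mul, Finset.sum_comm (γ := Fin D)]
  try ring

lemma trChain5 : trace ℂ _ (s1 (Fin D → ℂ) ∘ₗ s2 (Fin D → ℂ) ∘ₗ s3 (Fin D → ℂ)) = (D:ℂ)^1 := by
  rw [trace_eq_sum]
  simp [B4, s1, s2, s3, Module.Basis.tensorProduct_apply, Module.Basis.tensorProduct_repr_tmul_apply,
    Finsupp.single_apply, Fintype.sum_prod_type, Pi.single_apply, Finset.sum_ite_eq,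
    Finset.sum_ite_eq', mul_ite, ite_mul, Finset.sum_comm (γ := Fin D)]
  try ring

lemma trChain6 : trace ℂ _ (s3 (Fin D → ℂ) ∘ₗ s1 (Fin D → ℂ) ∘ₗ s2 (Fin D → ℂ)) = (D:ℂ)^1 := by
  rw [trace_eq_sum]
  simp [B4, s1, s2, s3, Module.Basis.tensorProduct_apply, Module.Basis.tensorProduct_repr_tmul_apply,
    Finsupp.single_apply, Fintype.sum_prod_type, Pi.single_apply, Finset.sum_ite_eq,
    Finset.sum_ite_eq', mul_ite, ite_mul, Finset.sum_comm (γ := Fin D)]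
  try ring

lemma trChain7 : trace ℂ _ (s1 (Fin D → ℂ) ∘ₗ s2 (Fin D → ℂ) ∘ₗ s3 (Fin D → ℂ) ∘ₗ s2 (Fin D → ℂ)) = (D:ℂ)^2 := by
  rw [trace_eq_sum]
  simp [B4, s1, s2, s3, Module.Basis.tensorProduct_apply, Module.Basis.tensorProduct_repr_tmul_apply,
    Finsupp.single_apply, Fintype.sum_prod_type, Pi.single_apply, Finset.sum_ite_eq,
    Finset.sum_ite_eq', mul_ite, ite_mul, Finset.sum_comm (γ := Fin D)]
  try ring

lemma trChain8 : trace ℂ _ (s2 (Fin D → ℂ) ∘ₗ s1 (Fin D → ℂ)) = (D:ℂ)^2 := by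
  rw [trace_eq_sum]
  simp [B4, s1, s2, s3, Module.Basis.tensorProduct_apply, Module.Basis.tensorProduct_repr_tmul_apply,
    Finsupp.single_apply, Fintype.sum_prod_type, Pi.single_apply, Finset.sum_ite_eq,
    Finset.sum_ite_eq', mul_ite, ite_mul, Finset.sum_comm (γ := Fin D)]
  try ring

lemma trChain9 : trace ℂ _ (s2 (Fin D → ℂ) ∘ₗ s3 (Fin D → ℂ) ∘ₗ s1 (Fin D → ℂ)) = (D:ℂ)^1 := by
  rw [trace_eq_sum]
  simp [B4, s1, s2, s3, Module.Basis.tensorProduct_apply, Module.Basis.tensorProduct_repr_tmul_apply,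
    Finsupp.single_apply, Fintype.sum_prod_type, Pi.single_apply, Finset.sum_ite_eq,
    Finset.sum_ite_eq', mul_ite, ite_mul, Finset.sum_comm (γ := Fin D)]
  try ring

lemma trChain10 : trace ℂ _ (s1 (Fin D → ℂ) ∘ₗ s2 (Fin D → ℂ) ∘ₗ s1 (Fin D → ℂ)) = (D:ℂ)^3 := by
  rw [trace_eq_sum]
  simp [B4, s1, s2, s3, Module.Basis.tensorProduct_apply, Module.Basis.tensorProduct_repr_tmul_apply,
    Finsupp.single_apply, Fintype.sum_prod_type, Pi.single_apply, Finset.sum_ite_eq,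
    Finset.sum_ite_eq', mul_ite, ite_mul, Finset.sum_comm (γ := Fin D)]
  try ring

lemma trChain11 : trace ℂ _ (s2 (Fin D → ℂ) ∘ₗ s3 (Fin D → ℂ) ∘ₗ s1 (Fin D → ℂ) ∘ₗ s2 (Fin D → ℂ)) = (D:ℂ)^2 := by
  rw [trace_eq_sum]
  simp [B4, s1, s2, s3, Module.Basis.tensorProduct_apply, Module.Basis.tensorProduct_repr_tmul_apply,
    Finsupp.single_apply, Fintype.sum_prod_type, Pi.single_apply, Finset.sum_ite_eq,
    Finset.sum_ite_eq', mul_ite, ite_mul, Finset.sum_comm (γ := Fin D)]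
  try ring

lemma trChain12 : trace ℂ _ (s3 (Fin D → ℂ) ∘ₗ s2 (Fin D → ℂ) ∘ₗ s1 (Fin D → ℂ)) = (D:ℂ)^1 := by
  rw [trace_eq_sum]
  simp [B4, s1, s2, s3, Module.Basis.tensorProduct_apply, Module.Basis.tensorProduct_repr_tmul_apply,
    Finsupp.single_apply, Fintype.sum_prod_type, Pi.single_apply, Finset.sum_ite_eq,
    Finset.sum_ite_eq', mul_ite, ite_mul, Finset.sum_comm (γ := Fin D)]
  try ring

lemma trChain13 : trace ℂ _ (s3 (Fin D → ℂ) ∘ₗ s1 (Fin D → ℂ) ∘ₗ s2 (Fin D → ℂ) ∘ₗ s1 (Fin D → ℂ)) = (D:ℂ)^2 := by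
  rw [trace_eq_sum]
  simp [B4, s1, s2, s3, Module.Basis.tensorProduct_apply, Module.Basis.tensorProduct_repr_tmul_apply,
    Finsupp.single_apply, Fintype.sum_prod_type, Pi.single_apply, Finset.sum_ite_eq,
    Finset.sum_ite_eq', mul_ite, ite_mul, Finset.sum_comm (γ := Fin D)]
  try ring

lemma trChain14 : trace ℂ _ (s1 (Fin D → ℂ) ∘ₗ s2 (Fin D → ℂ) ∘ₗ s3 (Fin D → ℂ) ∘ₗ s2 (Fin D → ℂ) ∘ₗ s1 (Fin D → ℂ)) = (D:ℂ)^3 := by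
  rw [trace_eq_sum]
  simp [B4, s1, s2, s3, Module.Basis.tensorProduct_apply, Module.Basis.tensorProduct_repr_tmul_apply,
    Finsupp.single_apply, Fintype.sum_prod_type, Pi.single_apply, Finset.sum_ite_eq,
    Finset.sum_ite_eq', mul_ite, ite_mul, Finset.sum_comm (γ := Fin D)]
  try ring

lemma trChain15 : trace ℂ _ (s1 (Fin D → ℂ) ∘ₗ s2 (Fin D → ℂ) ∘ₗ s3 (Fin D → ℂ) ∘ₗ s1 (Fin D → ℂ) ∘ₗ s2 (Fin D → ℂ) ∘ₗ s1 (Fin D → ℂ)) = (D:ℂ)^2 := by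
  rw [trace_eq_sum]
  simp [B4, s1, s2, s3, Module.Basis.tensorProduct_apply, Module.Basis.tensorProduct_repr_tmul_apply,
    Finsupp.single_apply, Fintype.sum_prod_type, Pi.single_apply, Finset.sum_ite_eq,
    Finset.sum_ite_eq', mul_ite, ite_mul, Finset.sum_comm (γ := Fin D)]
  try ring

lemma trace_opPi : trace ℂ _ (opPi (Fin D → ℂ)) = ((D:ℂ)^4 - (D:ℂ)^2)/12 := by
  rw [opPi]
  simp only [map_add, map_smul, smul_eq_mul, trChain0, trChain1, trChain2, trChain3, trChain4, trChain5, trChain6, trChain7, trChain8, trChain9, trChain10, trChain11, trChain12, trChain13, trChain14, trChain15]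
  ring

end ParafermAux

set_option synthInstance.maxHeartbeats 1000000 in
set_option maxHeartbeats 4000000 in
open ParafermAux in
/-- The subspace `(R_B⊗E) ∩ (E⊗R_B)` of `(ℂ^D)^{⊗4}` — the dual of the degree-4 component of
the dual cubic algebra `B^!` of the parafermionic algebra — has dimension `D²(D²-1)/12`. -/
theorem finrank_parafermionic_dual_degree_four (D : ℕ) (hD : 1 ≤ D) :
    Module.finrank ℂ
        ↥(subRE (parafermionicRelations D) ⊓ subER (parafermionicRelations D)) =
      D ^ 2 * (D ^ 2 - 1) / 12 := by
  have hrel : parafermionicRelations D = LinearMap.range (opTheta (Fin D → ℂ)) :=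
    relations_eq_range (Fin D → ℂ)
  have hsub : subRE (parafermionicRelations D) ⊓ subER (parafermionicRelations D) =
      LinearMap.range (opPi (Fin D → ℂ)) := by
    rw [hrel, subRE_range, subER_range, range_opPi]
  rw [hsub]
  haveI h3 : Module.Finite ℂ ((Fin D → ℂ) ⊗[ℂ] ((Fin D → ℂ) ⊗[ℂ] (Fin D → ℂ))) := inferInstance
  haveI h4 : Module.Finite ℂ
      ((Fin D → ℂ) ⊗[ℂ] ((Fin D → ℂ) ⊗[ℂ] ((Fin D → ℂ) ⊗[ℂ] (Fin D → ℂ)))) :=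
    Module.Finite.tensorProduct _ _ _
  haveI h5 : Module.Finite ℂ ↥(LinearMap.range (opPi (Fin D → ℂ))) := inferInstance
  haveI h6 : Module.Finite ℂ ↥(LinearMap.ker (opPi (Fin D → ℂ))) := inferInstance
  have hproj : LinearMap.IsProj (LinearMap.range (opPi (Fin D → ℂ))) (opPi (Fin D → ℂ)) :=
    ⟨fun x => ⟨x, rfl⟩, fun x hx => by
      obtain ⟨y, rfl⟩ := hx
      rw [← LinearMap.comp_apply, piIdem]⟩
  have htr := hproj.trace
  rw [trace_opPi] at htr
  have hD2 : (D:ℕ)^2 ≤ D^4 := by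
    calc D ^ 2 = 1 * D ^ 2 := (one_mul _).symm
    _ ≤ D ^ 2 * D ^ 2 := Nat.mul_le_mul_right _ (Nat.one_le_pow _ _ hD)
    _ = D ^ 4 := by ring
  have hcast : ((12 * Module.finrank ℂ
      ↥(LinearMap.range (opPi (Fin D → ℂ))) : ℕ) : ℂ) = ((D^4 - D^2 : ℕ) : ℂ) := by
    push_cast [Nat.cast_sub hD2]
    rw [← htr]
    ring
  have h12 : 12 * Module.finrank ℂ ↥(LinearMap.range (opPi (Fin D → ℂ))) = D^4 - D^2 :=
    Nat.cast_injective hcast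
  have hfactor : D ^ 2 * (D ^ 2 - 1) = D^4 - D^2 := by
    rw [Nat.mul_sub, mul_one, ← pow_add]
  rw [hfactor, ← h12, Nat.mul_div_cancel_left _ (by norm_num : 0 < 12)]
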